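/- Let n be odd and C a cyclic code of length n over R = Z4[u]/(u^2) generated by a single polynomial g(x) in R[x]/(x^n - 1). If g(x) divides x^n - 1 in R[x], then C is a free R-module; moreover if g' is the monic associate of g with deg g' = n - k, then {g', x g', ..., x^{k-1} g'} is an R-basis of C, so C has free rank n - deg g'. -/

import Mathlib

set_option maxSynthPendingDepth 3
set_option synthInstance.maxHeartbeats 400000

open DualNumber TrivSqZeroExt Polynomial

/-- The ring `R = ℤ₄[u]/(u²)`, realized as dual numbers over `ℤ₄`. -/
abbrev R4 := DualNumber (ZMod 4)



instance : Nontrivial R4 :=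
  ⟨0, 1, fun h => by
    have h2 := congrArg TrivSqZeroExt.fst h
    rw [fst_zero, fst_one] at h2
    exact absurd h2 (by decide)⟩

lemma t_sq : (inl 2 : R4) * inl 2 = 0 := by
  rw [← inl_mul]; norm_num
  exact inl_zero _

lemma eps_sq : (ε : R4) * ε = 0 := eps_mul_eps

lemma nonunit_decomp {x : R4} (hx : ¬ IsUnit x) :
    ∃ a b : R4, x = (inl 2) * a + ε * b := by
  rw [TrivSqZeroExt.isUnit_iff_isUnit_fst] at hx
  have h4 : ∀ a : ZMod 4, a = 0 ∨ a = 1 ∨ a = 2 ∨ a = 3 := by decide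
  obtain ⟨c, hc⟩ : ∃ c, x.fst = 2 * c := by
    rcases h4 x.fst with h|h|h|h
    · exact ⟨0, by rw [h]; decide⟩
    · exact absurd (h ▸ isUnit_one) hx
    · exact ⟨1, by rw [h]; decide⟩
    · exact absurd (h ▸ ⟨⟨3, 3, by decide, by decide⟩, rfl⟩) hx
  refine ⟨inl c, inl x.snd, ?_⟩
  conv_lhs => rw [← inl_fst_add_inr_snd_eq x]
  rw [hc, ← inl_mul]
  congr 1
  rw [mul_comm, show (ε : R4) = inr 1 from rfl, inl_mul_inr, smul_eq_mul, mul_one]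

lemma mul_nonunit {x y : R4} (hx : ¬ IsUnit x) (hy : ¬ IsUnit y) :
    ∃ c : R4, x * y = ((inl 2 : R4) * ε) * c := by
  obtain ⟨a₁, b₁, h₁⟩ := nonunit_decomp hx
  obtain ⟨a₂, b₂, h₂⟩ := nonunit_decomp hy
  exact ⟨a₁ * b₂ + a₂ * b₁, by rw [h₁, h₂]; linear_combination (a₁*a₂)*t_sq + (b₁*b₂)*eps_sq⟩

lemma triple_zero {x y z : R4} (hx : ¬ IsUnit x) (hy : ¬ IsUnit y) (hz : ¬ IsUnit z) :
    x * y * z = 0 := by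
  obtain ⟨c, hc⟩ := mul_nonunit hx hy
  obtain ⟨a, b, h₃⟩ := nonunit_decomp hz
  rw [hc, h₃]
  linear_combination (ε*c*a)*t_sq + (inl 2 * c * b)*eps_sq

lemma mem_nilradical_iff_not_isUnit {x : R4} : x ∈ nilradical R4 ↔ ¬ IsUnit x := by
  rw [mem_nilradical]
  constructor
  · rintro ⟨k, hk⟩ hu
    exact (hu.pow k).ne_zero hk
  · intro hx
    exact ⟨3, by rw [pow_succ, pow_two]; exact triple_zero hx hx hx⟩

lemma nn_mul_nn {x y : R4} (hx : x ∈ nilradical R4 * nilradical R4)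
    (hy : y ∈ nilradical R4 * nilradical R4) : x * y = 0 := by
  refine Submodule.mul_induction_on hx ?_ ?_
  · intro a ha b hb
    refine Submodule.mul_induction_on hy ?_ ?_
    · intro c hc d hd
      have : a * b * (c * d) = (a * b * c) * d := by ring
      rw [this, triple_zero (mem_nilradical_iff_not_isUnit.1 ha)
        (mem_nilradical_iff_not_isUnit.1 hb) (mem_nilradical_iff_not_isUnit.1 hc), zero_mul]
    · intro u v hu hv
      rw [mul_add, hu, hv, add_zero]
  · intro u v hu hv
    rw [add_mul, hu, hv, add_zero]

section Generic
variable {S : Type*} [CommRing S]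

/-- all coefficients lie in the ideal `J` -/
def CoeffMem (J : Ideal S) (p : S[X]) : Prop := ∀ i, p.coeff i ∈ J

lemma coeffMem_mul {J K : Ideal S} {p q : S[X]} (hp : CoeffMem J p) (hq : CoeffMem K q) :
    CoeffMem (J * K) (p * q) := by
  intro i
  rw [coeff_mul]
  exact Ideal.sum_mem _ fun c _ => Ideal.mul_mem_mul (hp _) (hq _)

lemma coeffMem_div_mod {J : Ideal S} {m s : S[X]} (hm : m.Monic) (hs : CoeffMem J s) :
    CoeffMem J (s /ₘ m) ∧ CoeffMem J (s %ₘ m) := by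
  have hmap : s.map (Ideal.Quotient.mk J) = 0 := by
    ext i
    simp [coeff_map, Ideal.Quotient.eq_zero_iff_mem.2 (hs i)]
  constructor <;> intro i <;> rw [← Ideal.Quotient.eq_zero_iff_mem, ← coeff_map]
  · rw [Polynomial.map_divByMonic _ hm, hmap, zero_divByMonic, coeff_zero]
  · rw [Polynomial.map_modByMonic _ hm, hmap, zero_modByMonic, coeff_zero]

lemma roundStep [Nontrivial S] {J : Ideal S} (hJ : J ≤ nilradical S) {m s : S[X]} (hm : m.Monic)
    (hs : CoeffMem J s) :
    ∃ w m' s' : S[X], IsUnit w ∧ w * (m + s) = m' + s' ∧ m'.Monic ∧ CoeffMem (J * J) s' := by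
  obtain ⟨hq, hr⟩ := coeffMem_div_mod hm hs
  have hqnil : IsNilpotent (s /ₘ m) := Polynomial.isNilpotent_iff.2 fun i => hJ (hq i)
  refine ⟨1 - s /ₘ m, m + s %ₘ m, -(s /ₘ m * s), hqnil.isUnit_one_sub, ?_, ?_, ?_⟩
  · have hdiv : s %ₘ m + m * (s /ₘ m) = s := modByMonic_add_div s m
    linear_combination -hdiv
  · exact hm.add_of_left (degree_modByMonic_lt s hm)
  · intro i
    rw [coeff_neg]
    exact neg_mem (coeffMem_mul hq hs i)

end Generic

lemma monic_associate {g : Polynomial R4} (hg : ∃ i, IsUnit (g.coeff i)) :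
    ∃ v g' : Polynomial R4, IsUnit v ∧ g'.Monic ∧ g = v * g' := by
  classical
  set P : ℕ → Prop := fun i => IsUnit (g.coeff i) with hP
  set d := Nat.findGreatest P g.natDegree with hdd
  obtain ⟨i₀, hi₀⟩ := hg
  have hi₀' : IsUnit (g.coeff i₀) := hi₀
  have hi₀le : i₀ ≤ g.natDegree := by
    by_contra h
    rw [g.coeff_eq_zero_of_natDegree_lt (lt_of_not_ge h)] at hi₀'
    exact (not_isUnit_zero : ¬ IsUnit (0 : R4)) hi₀'
  have hd : IsUnit (g.coeff d) := Nat.findGreatest_spec hi₀le hi₀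
  have hgt : ∀ i, d < i → ¬ IsUnit (g.coeff i) := by
    intro i hi
    by_cases h : i ≤ g.natDegree
    · exact Nat.findGreatest_is_greatest hi h
    · rw [g.coeff_eq_zero_of_natDegree_lt (lt_of_not_ge h)]
      exact not_isUnit_zero
  set a := hd.unit with ha
  set t : Polynomial R4 := C ((a⁻¹ : R4ˣ) : R4) * g with ht'
  have htd : t.coeff d = 1 := by
    rw [ht', coeff_C_mul, ← hd.unit_spec, ← ha, Units.inv_mul]
  have hti : ∀ i, d < i → t.coeff i ∈ nilradical R4 := by
    intro i hi
    rw [mem_nilradical_iff_not_isUnit]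
    intro hu
    apply hgt i hi
    have : g.coeff i = (a : R4) * (((a⁻¹ : R4ˣ) : R4) * g.coeff i) := by
      rw [← mul_assoc, a.mul_inv, one_mul]
    rw [this]
    exact (a.isUnit.mul (by rw [ht', coeff_C_mul] at hu; exact hu))
  -- split t = m + s
  have hXpow : (X ^ (d + 1) : Polynomial R4).Monic := monic_X_pow _
  set m : Polynomial R4 := t %ₘ X ^ (d + 1) with hm'
  set s : Polynomial R4 := X ^ (d + 1) * (t /ₘ X ^ (d + 1)) with hs'
  have hts : t = m + s := (modByMonic_add_div t (X ^ (d + 1))).symm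
  have hdegm : m.degree < (X ^ (d+1) : Polynomial R4).degree := degree_modByMonic_lt t hXpow
  rw [degree_X_pow] at hdegm
  have hscoeff : ∀ i, i ≤ d → s.coeff i = 0 := by
    intro i hi
    rw [hs', coeff_X_pow_mul']
    exact if_neg (by omega)
  have hmcoeff : ∀ i, d < i → m.coeff i = 0 := by
    intro i hi
    exact coeff_eq_zero_of_degree_lt (lt_of_lt_of_le hdegm (by exact_mod_cast Nat.succ_le_of_lt hi))
  have hmmonic : m.Monic := by
    apply monic_of_natDegree_le_of_coeff_eq_one d
    · exact natDegree_le_iff_degree_le.2 (by exact_mod_cast Order.le_of_lt_succ (by exact_mod_cast hdegm))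
    · have := congrArg (fun p => Polynomial.coeff p d) hts
      simp only [coeff_add] at this
      rw [hscoeff d le_rfl, add_zero] at this
      rw [← this, htd]
  have hsmem : CoeffMem (nilradical R4) s := by
    intro i
    rcases le_or_gt i d with h | h
    · rw [hscoeff i h]; exact zero_mem _
    · have := congrArg (fun p => Polynomial.coeff p i) hts
      simp only [coeff_add] at this
      rw [hmcoeff i h, zero_add] at this
      rw [← this]
      exact hti i h
  obtain ⟨w₁, m₁, s₁, hw₁, heq₁, hm₁, hs₁⟩ := roundStep le_rfl hmmonic hsmem
  obtain ⟨w₂, m₂, s₂, hw₂, heq₂, hm₂, hs₂⟩ :=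
    roundStep (Ideal.mul_le_left : nilradical R4 * nilradical R4 ≤ _) hm₁ hs₁
  have hs₂zero : s₂ = 0 := by
    refine Polynomial.ext fun i => ?_
    rw [coeff_zero]
    have h0 : (nilradical R4 * nilradical R4) * (nilradical R4 * nilradical R4) ≤ ⊥ :=
      Ideal.mul_le.2 fun r hr s hs => Ideal.mem_bot.2 (nn_mul_nn hr hs)
    exact Ideal.mem_bot.1 (h0 (hs₂ i))
  have hfinal : (w₂ * w₁) * t = m₂ := by
    rw [mul_assoc, hts, heq₁, heq₂, hs₂zero, add_zero]
  have hWunit : IsUnit (w₂ * w₁ * C ((a⁻¹ : R4ˣ) : R4)) :=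
    (hw₂.mul hw₁).mul (isUnit_C.2 (a⁻¹).isUnit)
  obtain ⟨u, hu⟩ := hWunit
  have hug : (u : Polynomial R4) * g = m₂ := by
    rw [ht'] at hfinal
    rw [hu]
    linear_combination hfinal
  refine ⟨(↑u⁻¹ : Polynomial R4), m₂, u⁻¹.isUnit, hm₂, ?_⟩
  rw [← hug, ← mul_assoc, Units.inv_mul, one_mul]



section MainLemma2
variable {S : Type*} [CommRing S] [Nontrivial S]

lemma exists_basis (n : ℕ) (hn : 0 < n) (g' : S[X]) (hmon : g'.Monic)
    (hdvd : g' ∣ (X : S[X]) ^ n - 1) :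
    ∃ b : Module.Basis (Fin (n - g'.natDegree)) S
        (Ideal.span {Ideal.Quotient.mk (Ideal.span {(X : S[X]) ^ n - 1}) g'}),
      ∀ i : Fin (n - g'.natDegree),
        (b i : S[X] ⧸ Ideal.span {(X : S[X]) ^ n - 1}) =
          Ideal.Quotient.mk (Ideal.span {(X : S[X]) ^ n - 1}) (X ^ (i : ℕ) * g') := by
  classical
  set f : S[X] := (X : S[X]) ^ n - 1 with hf
  have hfm : f.Monic := by
    have := monic_X_pow_sub_C (1 : S) hn.ne'
    rwa [map_one] at this
  set π := Ideal.Quotient.mk (Ideal.span {f}) with hπ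
  set h : S[X] := f /ₘ g' with hh
  have hfactor : g' * h = f := by
    have h0 : f %ₘ g' = 0 := (modByMonic_eq_zero_iff_dvd hmon).2 hdvd
    have := modByMonic_add_div f g'
    rwa [h0, zero_add] at this
  have hhm : h.Monic := hmon.of_mul_monic_left (by rw [hfactor]; exact hfm)
  have hdegf : f.natDegree = n := by
    rw [hf, ← C_1]; exact natDegree_X_pow_sub_C
  have hdeg : g'.natDegree + h.natDegree = n := by
    rw [← hdegf, ← hfactor, hmon.natDegree_mul' hhm.ne_zero]
  set k := n - g'.natDegree with hk
  have hkh : h.natDegree = k := by omega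
  -- the family in the quotient
  set v : Fin k → S[X] ⧸ Ideal.span {f} := fun i => π (X ^ (i : ℕ) * g') with hv
  have hvmem : ∀ i, v i ∈ Ideal.span {π g'} :=
    fun i => Ideal.mem_span_singleton'.2 ⟨π (X ^ (i : ℕ)), (map_mul π _ _).symm⟩
  have hsmul : ∀ (c : S) (p : S[X]), c • π p = π (C c * p) := by
    intro c p
    rw [Algebra.smul_def, IsScalarTower.algebraMap_apply S S[X] (S[X] ⧸ Ideal.span {f}),
      Ideal.Quotient.algebraMap_eq, ← map_mul, algebraMap_eq]
  have hsum : ∀ c : Fin k → S,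
      (∑ i, c i • v i) = π ((∑ i : Fin k, C (c i) * X ^ (i : ℕ)) * g') := by
    intro c
    rw [Finset.sum_mul, map_sum]
    refine Finset.sum_congr rfl fun i _ => ?_
    rw [hv, hsmul, ← mul_assoc]
  -- coefficients of such sums
  have hcoeff_hi : ∀ (c : Fin k → S) (j : ℕ), k ≤ j →
      (∑ i : Fin k, C (c i) * X ^ (i : ℕ)).coeff j = 0 := by
    intro c j hj
    rw [finset_sum_coeff]
    refine Finset.sum_eq_zero fun i _ => ?_
    rw [coeff_C_mul, coeff_X_pow, if_neg (by omega : ¬ j = (i : ℕ)), mul_zero]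
  have hcoeff_lo : ∀ (c : Fin k → S) (i : Fin k),
      (∑ j : Fin k, C (c j) * X ^ (j : ℕ)).coeff (i : ℕ) = c i := by
    intro c i
    rw [finset_sum_coeff]
    rw [Finset.sum_eq_single i]
    · rw [coeff_C_mul, coeff_X_pow, if_pos rfl, mul_one]
    · intro j _ hji
      rw [coeff_C_mul, coeff_X_pow, if_neg (fun hh => hji (Fin.ext hh.symm)), mul_zero]
    · intro hi; exact absurd (Finset.mem_univ i) hi
  -- key cancellation
  have hker : ∀ c : Fin k → S, π ((∑ i : Fin k, C (c i) * X ^ (i : ℕ)) * g') = 0 →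
      (∑ i : Fin k, C (c i) * X ^ (i : ℕ)) = 0 := by
    intro c hc
    set r : S[X] := ∑ i : Fin k, C (c i) * X ^ (i : ℕ) with hr
    have hmem : r * g' ∈ Ideal.span {f} := by
      rwa [hπ, Ideal.Quotient.eq_zero_iff_mem] at hc
    obtain ⟨e, he⟩ := Ideal.mem_span_singleton.1 hmem
    by_cases he0 : e = 0
    · rw [he0, mul_zero] at he
      have h2 : g' * r = g' * 0 := by rw [mul_zero, mul_comm]; exact he
      exact hmon.isRegular.left h2
    · exfalso
      have hre : r = h * e := by
        apply hmon.isRegular.left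
        calc g' * r = r * g' := mul_comm _ _
          _ = f * e := he
          _ = g' * (h * e) := by rw [← hfactor]; ring
      have hne : h * e ≠ 0 := fun h0 => he0 (hhm.isRegular.left
        (show h * e = h * 0 by rw [h0, mul_zero]))
      have hlead : r.coeff ((h * e).natDegree) ≠ 0 := by
        rw [hre, ← leadingCoeff]
        exact leadingCoeff_ne_zero.2 hne
      have hdeg' : k ≤ (h * e).natDegree := by
        rw [hhm.natDegree_mul' he0, hkh]
        omega
      exact hlead (hcoeff_hi c _ hdeg')
  -- the family inside the submodule
  set F : Fin k → (Ideal.span {π g'} : Ideal (S[X] ⧸ Ideal.span {f})) :=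
    fun i => ⟨v i, hvmem i⟩ with hF
  have hFcoe : ∀ i, (F i : S[X] ⧸ Ideal.span {f}) = v i := fun i => rfl
  set ι : (Ideal.span {π g'} : Ideal (S[X] ⧸ Ideal.span {f})) →ₗ[S] S[X] ⧸ Ideal.span {f} :=
    ((Ideal.span {π g'}).subtype).restrictScalars S with hι
  have hιapp : ∀ x, ι x = (x : S[X] ⧸ Ideal.span {f}) := fun _ => rfl
  have hcoe : ∀ c : Fin k → S,
      ((∑ i, c i • F i : (Ideal.span {π g'} : Ideal (S[X] ⧸ Ideal.span {f}))) :
        S[X] ⧸ Ideal.span {f}) = ∑ i, c i • v i := by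
    intro c
    calc ((∑ i, c i • F i : (Ideal.span {π g'} : Ideal (S[X] ⧸ Ideal.span {f}))) :
          S[X] ⧸ Ideal.span {f}) = ι (∑ i, c i • F i) := (hιapp _).symm
      _ = ∑ i, ι (c i • F i) := map_sum ι _ _
      _ = ∑ i, c i • v i := Finset.sum_congr rfl fun i _ => by
            rw [ι.map_smul, hιapp, hFcoe]
  have hli : LinearIndependent S F := by
    rw [Fintype.linearIndependent_iff]
    intro c hc i
    have hc' : (∑ i, c i • v i) = 0 := by
      have h2 := congrArg (fun x : (Ideal.span {π g'} : Ideal (S[X] ⧸ Ideal.span {f})) =>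
        (x : S[X] ⧸ Ideal.span {f})) hc
      simpa [hcoe c] using h2
    rw [hsum] at hc'
    have hr0 := hker c hc'
    have := hcoeff_lo c i
    rw [hr0, coeff_zero] at this
    exact this.symm
  have hspan : ⊤ ≤ Submodule.span S (Set.range F) := by
    rintro ⟨z, hz⟩ -
    obtain ⟨q, hq⟩ := Ideal.mem_span_singleton'.1 hz
    obtain ⟨p, rfl⟩ := Ideal.Quotient.mk_surjective q
    set r : S[X] := p %ₘ h with hrdef
    have hdiff : p * g' - r * g' = f * (p /ₘ h) := by
      have hmd := modByMonic_add_div p h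
      linear_combination (-g') * hmd + (p /ₘ h) * hfactor
    have hzeq : z = π (r * g') := by
      rw [← hq, ← map_mul, hπ, Ideal.Quotient.mk_eq_mk_iff_sub_mem]
      exact Ideal.mem_span_singleton.2 (Dvd.intro _ hdiff.symm)
    set c : Fin k → S := fun i => r.coeff (i : ℕ) with hc
    have hre : (∑ i : Fin k, C (c i) * X ^ (i : ℕ)) = r := by
      by_cases hr0 : r = 0
      · rw [hr0]
        refine Finset.sum_eq_zero fun i _ => ?_
        rw [hc]
        simp [hr0]
      · have hrk : r.natDegree < k := by
          rw [natDegree_lt_iff_degree_lt hr0, ← hkh, ← degree_eq_natDegree hhm.ne_zero]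
          exact degree_modByMonic_lt p hhm
        simp only [hc]
        calc (∑ i : Fin k, C (r.coeff (i : ℕ)) * X ^ (i : ℕ))
            = ∑ i ∈ Finset.range k, C (r.coeff i) * X ^ i :=
              Fin.sum_univ_eq_sum_range (fun j => C (r.coeff j) * X ^ j) k
          _ = ∑ i ∈ Finset.range k, (monomial i) (r.coeff i) :=
              Finset.sum_congr rfl fun i _ => C_mul_X_pow_eq_monomial
          _ = r := (as_sum_range' r k hrk).symm
    have hzsum : (∑ i, c i • v i) = z := by
      rw [hsum, hre, ← hzeq]
    have hzF : (⟨z, hz⟩ : (Ideal.span {π g'} : Ideal (S[X] ⧸ Ideal.span {f}))) =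
        ∑ i, c i • F i := by
      refine Subtype.ext ?_
      show z = _
      rw [hcoe c, hzsum]
    rw [hzF]
    exact Submodule.sum_mem _ fun i _ => Submodule.smul_mem _ _
      (Submodule.subset_span ⟨i, rfl⟩)
  refine ⟨Module.Basis.mk hli hspan, fun i => ?_⟩
  rw [Module.Basis.mk_apply]

end MainLemma2

set_option maxHeartbeats 1600000

/-- Let `n` be odd and `C = ⟨g(x)⟩` a principally generated cyclic code of
length `n` over `R = ℤ₄[u]/(u²)`. If `g ∣ xⁿ - 1` in `R[x]`, then `C` is a free
`R`-module; moreover, if `g = v g'` with `v` a unit and `g'` monic of degree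
`n - k`, then `{g', x g', …, x^{k-1} g'}` is an `R`-basis of `C`, so `C` has
free rank `n - deg g'`. -/
theorem stmt15 (n : ℕ) (hpos : 0 < n) (hodd : Odd n) (g : Polynomial R4)
    (hdvd : g ∣ (X : Polynomial R4) ^ n - 1) :
    Module.Free R4
      (Ideal.span {Ideal.Quotient.mk (Ideal.span {(X : Polynomial R4) ^ n - 1}) g}) ∧
    ∀ (v g' : Polynomial R4), IsUnit v → g'.Monic → g = v * g' →
      ∃ b : Module.Basis (Fin (n - g'.natDegree)) R4
          (Ideal.span {Ideal.Quotient.mk (Ideal.span {(X : Polynomial R4) ^ n - 1}) g}),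
        ∀ i : Fin (n - g'.natDegree),
          (b i : Polynomial R4 ⧸ Ideal.span {(X : Polynomial R4) ^ n - 1}) =
            Ideal.Quotient.mk (Ideal.span {(X : Polynomial R4) ^ n - 1}) (X ^ (i : ℕ) * g') := by
  classical
  have hf : ((X : Polynomial R4) ^ n - 1).Monic := by
    have := monic_X_pow_sub_C (1 : R4) hpos.ne'
    rwa [map_one] at this
  have hexists : ∃ i, IsUnit (g.coeff i) := by
    by_contra hcon
    push_neg at hcon
    have hnil : IsNilpotent g := Polynomial.isNilpotent_iff.2 fun i =>
      mem_nilradical.1 (mem_nilradical_iff_not_isUnit.2 (hcon i))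
    obtain ⟨c, hc⟩ := hdvd
    obtain ⟨k, hk⟩ := hnil
    have hzero : ((X : Polynomial R4) ^ n - 1) ^ k = 0 := by
      rw [hc, mul_pow, hk, zero_mul]
    exact (hf.pow k).ne_zero hzero
  have key : ∀ v g' : Polynomial R4, IsUnit v → g'.Monic → g = v * g' →
      ∃ b : Module.Basis (Fin (n - g'.natDegree)) R4
          (Ideal.span {Ideal.Quotient.mk (Ideal.span {(X : Polynomial R4) ^ n - 1}) g}),
        ∀ i : Fin (n - g'.natDegree),
          (b i : Polynomial R4 ⧸ Ideal.span {(X : Polynomial R4) ^ n - 1}) =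
            Ideal.Quotient.mk (Ideal.span {(X : Polynomial R4) ^ n - 1}) (X ^ (i : ℕ) * g') := by
    intro v g' hv hm hfac
    obtain ⟨u, hu⟩ := hv
    have hdvd' : g' ∣ (X : Polynomial R4) ^ n - 1 :=
      dvd_trans ⟨v, by rw [hfac, mul_comm]⟩ hdvd
    obtain ⟨b, hb⟩ := exists_basis n hpos g' hm hdvd'
    have hspan : Ideal.span {Ideal.Quotient.mk (Ideal.span {(X : Polynomial R4) ^ n - 1}) g}
        = Ideal.span {Ideal.Quotient.mk (Ideal.span {(X : Polynomial R4) ^ n - 1}) g'} := by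
      set π := Ideal.Quotient.mk (Ideal.span {(X : Polynomial R4) ^ n - 1}) with hπ
      apply le_antisymm
      · rw [Ideal.span_le, Set.singleton_subset_iff]
        exact Ideal.mem_span_singleton.2 ⟨π v, by rw [hfac, ← map_mul, mul_comm g' v]⟩
      · rw [Ideal.span_le, Set.singleton_subset_iff]
        refine Ideal.mem_span_singleton.2 ⟨π ↑u⁻¹, ?_⟩
        rw [← map_mul]
        congr 1
        rw [hfac, ← hu, mul_comm (↑u : Polynomial R4) g', mul_assoc, Units.mul_inv, mul_one]
    rw [hspan]
    exact ⟨b, hb⟩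
  obtain ⟨v₀, g₀, hv₀, hm₀, hfac₀⟩ := monic_associate hexists
  obtain ⟨b₀, -⟩ := key v₀ g₀ hv₀ hm₀ hfac₀
  exact ⟨Module.Free.of_basis b₀, key⟩
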